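/- arXiv:2311.18039 — 3 statements merged into one kernel-verified Lean document; each statement's English description precedes it below -/
import Mathlib

section
/- Let X be a real N × p matrix with XᵀX invertible, and let W₁ (N × q₁) and W₂ (N × q₂) satisfy XᵀW₁ = 0, XᵀW₂ = 0, W₁ᵀW₂ = 0, W₁ᵀW₁ = I_{q₁}, and W₂ᵀW₂ = I_{q₂}. Let F₁ and F₂ be symmetric positive definite matrices of sizes q₁ and q₂, let τ_ε, τ₁, τ₂ > 0, and let y ∈ ℝᴺ. Define δ̂ = (XᵀX)⁻¹Xᵀy and m_j = τ_ε (τ_ε I + τ_j F_j)⁻¹ W_jᵀ y for j = 1, 2. Then there exists a constant c ∈ ℝ, not depending on (δ, η₁, η₂), such that for all δ ∈ ℝᵖ, η₁ ∈ ℝ^{q₁}, η₂ ∈ ℝ^{q₂}: τ_ε ‖y − Xδ − W₁η₁ − W₂η₂‖² + τ₁ η₁ᵀF₁η₁ + τ₂ η₂ᵀF₂η₂ = τ_ε (δ − δ̂)ᵀ(XᵀX)(δ − δ̂) + (η₁ − m₁)ᵀ(τ_ε I + τ₁F₁)(η₁ − m₁) + (η₂ − m₂)ᵀ(τ_ε I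 + τ₂F₂)(η₂ − m₂) + c. In particular, the δ-component δ̂ and its precision block τ_ε XᵀX do not depend on τ₁, τ₂, F₁, or F₂. -/
open Matrix

lemma dot_mv_left {m n : ℕ} (A : Matrix (Fin m) (Fin n) ℝ) (u : Fin n → ℝ) (v : Fin m → ℝ) :
    (A *ᵥ u) ⬝ᵥ v = u ⬝ᵥ (Aᵀ *ᵥ v) := by
  rw [dotProduct_comm, dotProduct_mulVec, ← Matrix.mulVec_transpose, dotProduct_comm]

lemma dot_mv_symm {n : ℕ} (A : Matrix (Fin n) (Fin n) ℝ) (hA : Aᵀ = A) (u v : Fin n → ℝ) :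
    v ⬝ᵥ (A *ᵥ u) = u ⬝ᵥ (A *ᵥ v) := by
  rw [dotProduct_comm, dot_mv_left, hA]

lemma quad_expand {n : ℕ} (A : Matrix (Fin n) (Fin n) ℝ) (hA : Aᵀ = A) (u m : Fin n → ℝ) :
    (u - m) ⬝ᵥ (A *ᵥ (u - m))
      = u ⬝ᵥ (A *ᵥ u) - 2 * (u ⬝ᵥ (A *ᵥ m)) + m ⬝ᵥ (A *ᵥ m) := by
  simp only [Matrix.mulVec_sub, dotProduct_sub, sub_dotProduct]
  rw [dot_mv_symm A hA u m]
  ring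

lemma posDef_smul' {n : ℕ} {M : Matrix (Fin n) (Fin n) ℝ} (hM : M.PosDef) {c : ℝ}
    (hc : 0 < c) : (c • M).PosDef := by
  refine ⟨?_, fun x hx => ?_⟩
  · simpa [Matrix.IsHermitian, conjTranspose_smul] using congrArg (c • ·) hM.1.eq
  · exact (hM.smul hc).2 hx

/-- Quadratic-form separation for restricted regression with two random
effects: there is a constant `c` (independent of `(δ, η₁, η₂)`) such that
`τ_ε‖y − Xδ − W₁η₁ − W₂η₂‖² + τ₁η₁ᵀF₁η₁ + τ₂η₂ᵀF₂η₂`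
equals `τ_ε(δ − δ̂)ᵀ(XᵀX)(δ − δ̂) + (η₁ − m₁)ᵀ(τ_εI + τ₁F₁)(η₁ − m₁)
+ (η₂ − m₂)ᵀ(τ_εI + τ₂F₂)(η₂ − m₂) + c`. -/
theorem two_random_effects_quadratic_separation
    {N p q₁ q₂ : ℕ}
    (X : Matrix (Fin N) (Fin p) ℝ) (hX : IsUnit (Xᵀ * X).det)
    (W₁ : Matrix (Fin N) (Fin q₁) ℝ) (W₂ : Matrix (Fin N) (Fin q₂) ℝ)
    (hXW₁ : Xᵀ * W₁ = 0) (hXW₂ : Xᵀ * W₂ = 0) (hW₁₂ : W₁ᵀ * W₂ = 0)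
    (hW₁ : W₁ᵀ * W₁ = 1) (hW₂ : W₂ᵀ * W₂ = 1)
    (F₁ : Matrix (Fin q₁) (Fin q₁) ℝ) (F₂ : Matrix (Fin q₂) (Fin q₂) ℝ)
    (hF₁ : F₁.PosDef) (hF₂ : F₂.PosDef)
    (τε τ₁ τ₂ : ℝ) (hτε : 0 < τε) (hτ₁ : 0 < τ₁) (hτ₂ : 0 < τ₂)
    (y : Fin N → ℝ) :
    let δhat : Fin p → ℝ := (Xᵀ * X)⁻¹ *ᵥ (Xᵀ *ᵥ y)
    let m₁ : Fin q₁ → ℝ :=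
      τε • ((τε • (1 : Matrix (Fin q₁) (Fin q₁) ℝ) + τ₁ • F₁)⁻¹ *ᵥ (W₁ᵀ *ᵥ y))
    let m₂ : Fin q₂ → ℝ :=
      τε • ((τε • (1 : Matrix (Fin q₂) (Fin q₂) ℝ) + τ₂ • F₂)⁻¹ *ᵥ (W₂ᵀ *ᵥ y))
    ∃ c : ℝ, ∀ (δ : Fin p → ℝ) (η₁ : Fin q₁ → ℝ) (η₂ : Fin q₂ → ℝ),
      τε * ((y - X *ᵥ δ - W₁ *ᵥ η₁ - W₂ *ᵥ η₂) ⬝ᵥ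
              (y - X *ᵥ δ - W₁ *ᵥ η₁ - W₂ *ᵥ η₂))
        + τ₁ * (η₁ ⬝ᵥ (F₁ *ᵥ η₁)) + τ₂ * (η₂ ⬝ᵥ (F₂ *ᵥ η₂))
      = τε * ((δ - δhat) ⬝ᵥ ((Xᵀ * X) *ᵥ (δ - δhat)))
        + (η₁ - m₁) ⬝ᵥ ((τε • (1 : Matrix (Fin q₁) (Fin q₁) ℝ) + τ₁ • F₁) *ᵥ (η₁ - m₁))
        + (η₂ - m₂) ⬝ᵥ ((τε • (1 : Matrix (Fin q₂) (Fin q₂) ℝ) + τ₂ • F₂) *ᵥ (η₂ - m₂))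
        + c := by
  intro δhat m₁ m₂
  set A₁ : Matrix (Fin q₁) (Fin q₁) ℝ := τε • (1 : Matrix (Fin q₁) (Fin q₁) ℝ) + τ₁ • F₁ with hA₁def
  set A₂ : Matrix (Fin q₂) (Fin q₂) ℝ := τε • (1 : Matrix (Fin q₂) (Fin q₂) ℝ) + τ₂ • F₂ with hA₂def
  -- symmetry facts
  have hXsym : (Xᵀ * X)ᵀ = Xᵀ * X := by rw [transpose_mul, transpose_transpose]
  have hF₁sym : F₁ᵀ = F₁ := hF₁.1.eq
  have hF₂sym : F₂ᵀ = F₂ := hF₂.1.eq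
  have hA₁sym : A₁ᵀ = A₁ := by
    rw [hA₁def, transpose_add, transpose_smul, transpose_smul, transpose_one, hF₁sym]
  have hA₂sym : A₂ᵀ = A₂ := by
    rw [hA₂def, transpose_add, transpose_smul, transpose_smul, transpose_one, hF₂sym]
  -- invertibility
  have hA₁pd : A₁.PosDef := (posDef_smul' Matrix.PosDef.one hτε).add (posDef_smul' hF₁ hτ₁)
  have hA₂pd : A₂.PosDef := (posDef_smul' Matrix.PosDef.one hτε).add (posDef_smul' hF₂ hτ₂)
  have hA₁u : IsUnit A₁.det := isUnit_iff_ne_zero.mpr hA₁pd.det_pos.ne'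
  have hA₂u : IsUnit A₂.det := isUnit_iff_ne_zero.mpr hA₂pd.det_pos.ne'
  -- key mulVec facts
  have hδhat : (Xᵀ * X) *ᵥ δhat = Xᵀ *ᵥ y := by
    show (Xᵀ * X) *ᵥ ((Xᵀ * X)⁻¹ *ᵥ (Xᵀ *ᵥ y)) = Xᵀ *ᵥ y
    rw [mulVec_mulVec, Matrix.mul_nonsing_inv _ hX, one_mulVec]
  have hm₁ : A₁ *ᵥ m₁ = τε • (W₁ᵀ *ᵥ y) := by
    show A₁ *ᵥ (τε • (A₁⁻¹ *ᵥ (W₁ᵀ *ᵥ y))) = _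
    rw [mulVec_smul, mulVec_mulVec, Matrix.mul_nonsing_inv _ hA₁u, one_mulVec]
  have hm₂ : A₂ *ᵥ m₂ = τε • (W₂ᵀ *ᵥ y) := by
    show A₂ *ᵥ (τε • (A₂⁻¹ *ᵥ (W₂ᵀ *ᵥ y))) = _
    rw [mulVec_smul, mulVec_mulVec, Matrix.mul_nonsing_inv _ hA₂u, one_mulVec]
  refine ⟨τε * (y ⬝ᵥ y) - τε * (δhat ⬝ᵥ ((Xᵀ * X) *ᵥ δhat))
      - m₁ ⬝ᵥ (A₁ *ᵥ m₁) - m₂ ⬝ᵥ (A₂ *ᵥ m₂), fun δ η₁ η₂ => ?_⟩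
  -- expansion of the residual norm
  have h1 : (X *ᵥ δ) ⬝ᵥ (W₁ *ᵥ η₁) = 0 := by
    rw [dot_mv_left, mulVec_mulVec, hXW₁, zero_mulVec, dotProduct_zero]
  have h2 : (X *ᵥ δ) ⬝ᵥ (W₂ *ᵥ η₂) = 0 := by
    rw [dot_mv_left, mulVec_mulVec, hXW₂, zero_mulVec, dotProduct_zero]
  have h3 : (W₁ *ᵥ η₁) ⬝ᵥ (W₂ *ᵥ η₂) = 0 := by
    rw [dot_mv_left, mulVec_mulVec, hW₁₂, zero_mulVec, dotProduct_zero]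
  have h4 : (X *ᵥ δ) ⬝ᵥ (X *ᵥ δ) = δ ⬝ᵥ ((Xᵀ * X) *ᵥ δ) := by
    rw [dot_mv_left, mulVec_mulVec]
  have h5 : (W₁ *ᵥ η₁) ⬝ᵥ (W₁ *ᵥ η₁) = η₁ ⬝ᵥ η₁ := by
    rw [dot_mv_left, mulVec_mulVec, hW₁, one_mulVec]
  have h6 : (W₂ *ᵥ η₂) ⬝ᵥ (W₂ *ᵥ η₂) = η₂ ⬝ᵥ η₂ := by
    rw [dot_mv_left, mulVec_mulVec, hW₂, one_mulVec]
  have h7 : y ⬝ᵥ (X *ᵥ δ) = δ ⬝ᵥ (Xᵀ *ᵥ y) := by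
    rw [dotProduct_comm, dot_mv_left]
  have h8 : y ⬝ᵥ (W₁ *ᵥ η₁) = η₁ ⬝ᵥ (W₁ᵀ *ᵥ y) := by
    rw [dotProduct_comm, dot_mv_left]
  have h9 : y ⬝ᵥ (W₂ *ᵥ η₂) = η₂ ⬝ᵥ (W₂ᵀ *ᵥ y) := by
    rw [dotProduct_comm, dot_mv_left]
  have hLHS : (y - X *ᵥ δ - W₁ *ᵥ η₁ - W₂ *ᵥ η₂) ⬝ᵥ
        (y - X *ᵥ δ - W₁ *ᵥ η₁ - W₂ *ᵥ η₂)
      = y ⬝ᵥ y - 2 * (δ ⬝ᵥ (Xᵀ *ᵥ y)) - 2 * (η₁ ⬝ᵥ (W₁ᵀ *ᵥ y)) - 2 * (η₂ ⬝ᵥ (W₂ᵀ *ᵥ y))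
        + δ ⬝ᵥ ((Xᵀ * X) *ᵥ δ) + η₁ ⬝ᵥ η₁ + η₂ ⬝ᵥ η₂ := by
    simp only [dotProduct_sub, sub_dotProduct]
    rw [dotProduct_comm (X *ᵥ δ) y, dotProduct_comm (W₁ *ᵥ η₁) y,
      dotProduct_comm (W₂ *ᵥ η₂) y, dotProduct_comm (W₁ *ᵥ η₁) (X *ᵥ δ),
      dotProduct_comm (W₂ *ᵥ η₂) (X *ᵥ δ), dotProduct_comm (W₂ *ᵥ η₂) (W₁ *ᵥ η₁),
      h1, h2, h3, h4, h5, h6, h7, h8, h9]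
    ring
  -- expansions of the completed squares
  have hq0 : (δ - δhat) ⬝ᵥ ((Xᵀ * X) *ᵥ (δ - δhat))
      = δ ⬝ᵥ ((Xᵀ * X) *ᵥ δ) - 2 * (δ ⬝ᵥ (Xᵀ *ᵥ y)) + δhat ⬝ᵥ ((Xᵀ * X) *ᵥ δhat) := by
    rw [quad_expand _ hXsym, hδhat]
  have hq1 : (η₁ - m₁) ⬝ᵥ (A₁ *ᵥ (η₁ - m₁))
      = τε * (η₁ ⬝ᵥ η₁) + τ₁ * (η₁ ⬝ᵥ (F₁ *ᵥ η₁))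
        - 2 * (τε * (η₁ ⬝ᵥ (W₁ᵀ *ᵥ y))) + m₁ ⬝ᵥ (A₁ *ᵥ m₁) := by
    rw [quad_expand _ hA₁sym, hm₁, dotProduct_smul]
    have : η₁ ⬝ᵥ (A₁ *ᵥ η₁) = τε * (η₁ ⬝ᵥ η₁) + τ₁ * (η₁ ⬝ᵥ (F₁ *ᵥ η₁)) := by
      rw [hA₁def, add_mulVec, dotProduct_add, smul_mulVec, smul_mulVec,
        one_mulVec, dotProduct_smul, dotProduct_smul]
      simp [smul_eq_mul]
    rw [this]; simp [smul_eq_mul]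
  have hq2 : (η₂ - m₂) ⬝ᵥ (A₂ *ᵥ (η₂ - m₂))
      = τε * (η₂ ⬝ᵥ η₂) + τ₂ * (η₂ ⬝ᵥ (F₂ *ᵥ η₂))
        - 2 * (τε * (η₂ ⬝ᵥ (W₂ᵀ *ᵥ y))) + m₂ ⬝ᵥ (A₂ *ᵥ m₂) := by
    rw [quad_expand _ hA₂sym, hm₂, dotProduct_smul]
    have : η₂ ⬝ᵥ (A₂ *ᵥ η₂) = τε * (η₂ ⬝ᵥ η₂) + τ₂ * (η₂ ⬝ᵥ (F₂ *ᵥ η₂)) := by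
      rw [hA₂def, add_mulVec, dotProduct_add, smul_mulVec, smul_mulVec,
        one_mulVec, dotProduct_smul, dotProduct_smul]
      simp [smul_eq_mul]
    rw [this]; simp [smul_eq_mul]
  rw [hLHS, hq0, hq1, hq2]
  ring
end

section
/- Under the hypotheses of the separation identity — X a real N × p matrix with XᵀX invertible; W₁ (N × q₁), W₂ (N × q₂) with XᵀW₁ = 0, XᵀW₂ = 0, W₁ᵀW₂ = 0, W₁ᵀW₁ = I, W₂ᵀW₂ = I; F₁, F₂ symmetric positive definite; τ_ε, τ₁, τ₂ > 0; y ∈ ℝᴺ; δ̂ = (XᵀX)⁻¹Xᵀy — there exists a constant C > 0, not depending on δ, such that for every δ ∈ ℝᵖ: ∫_{ℝ^{q₁}} ∫_{ℝ^{q₂}} exp( −½ [ τ_ε ‖y − Xδ − W₁η₁ − W₂η₂‖² + τ₁ η₁ᵀF₁η₁ + τ₂ η₂ᵀF₂η₂ ] ) dη₂ dη₁ = C · exp( −½ τ_ε (δ − δ̂)ᵀ(XᵀX)(δ − δ̂) ). In particular, the marginal (over η₁, η₂) unnormalized posterior density of δ is a Gaussian density with mean δ̂ = (XᵀX)⁻¹Xᵀy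 and covariance (τ_ε XᵀX)⁻¹, independent of τ₁, τ₂, F₁, F₂. -/
open Matrix MeasureTheory

private lemma dot_mulVec_mulVec {m n k : ℕ} (A : Matrix (Fin m) (Fin n) ℝ)
    (B : Matrix (Fin m) (Fin k) ℝ) (v : Fin n → ℝ) (w : Fin k → ℝ) :
    (A *ᵥ v) ⬝ᵥ (B *ᵥ w) = v ⬝ᵥ ((Aᵀ * B) *ᵥ w) := by
  conv_rhs => rw [← mulVec_mulVec, dotProduct_mulVec v Aᵀ, vecMul_transpose]

private lemma dot_mulVec_left {m k : ℕ} (W : Matrix (Fin m) (Fin k) ℝ)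
    (y : Fin m → ℝ) (b : Fin k → ℝ) :
    y ⬝ᵥ (W *ᵥ b) = (Wᵀ *ᵥ y) ⬝ᵥ b := by
  rw [dotProduct_mulVec, mulVec_transpose]

private lemma gauss_integrable {q : ℕ} (τε τ : ℝ) (hτε : 0 < τε) (hτ : 0 < τ)
    (F : Matrix (Fin q) (Fin q) ℝ) (hF : F.PosDef) (a : Fin q → ℝ) :
    Integrable (fun η : Fin q → ℝ =>
      Real.exp (-(1 / 2) * (τε * (η ⬝ᵥ η - 2 * (a ⬝ᵥ η)) + τ * (η ⬝ᵥ (F *ᵥ η))))) := by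
  have hg : Integrable (fun η : Fin q → ℝ =>
      Real.exp (-(τε / 2) * ∑ i, η i ^ 2 + ∑ i, (τε * a i) * η i)) := by
    have h := GaussianFourier.integrable_cexp_neg_mul_sum_add (b := ((τε / 2 : ℝ) : ℂ))
        (by simpa using half_pos hτε) (fun i => ((τε * a i : ℝ) : ℂ))
    refine h.norm.congr ?_
    filter_upwards with v
    have harg : (-((τε / 2 : ℝ) : ℂ) * ∑ i, (v i : ℂ) ^ 2 + ∑ i, ((τε * a i : ℝ) : ℂ) * v i)
        = ((-(τε / 2) * ∑ i, v i ^ 2 + ∑ i, (τε * a i) * v i : ℝ) : ℂ) := by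
      push_cast; ring
    rw [harg, ← Complex.ofReal_exp, Complex.norm_real, Real.norm_eq_abs,
      abs_of_pos (Real.exp_pos _)]
  refine hg.mono' ?_ ?_
  · refine Continuous.aestronglyMeasurable ?_
    apply Real.continuous_exp.comp
    apply Continuous.mul continuous_const
    apply Continuous.add
    · exact continuous_const.mul ((continuous_id.dotProduct continuous_id).sub
        (continuous_const.mul (continuous_const.dotProduct continuous_id)))
    · exact continuous_const.mul
        (continuous_id.dotProduct (continuous_const.matrix_mulVec continuous_id))
  · filter_upwards with η
    rw [Real.norm_eq_abs, abs_of_pos (Real.exp_pos _)]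
    apply Real.exp_le_exp.mpr
    have h0 : 0 ≤ η ⬝ᵥ (F *ᵥ η) := by simpa using hF.posSemidef.dotProduct_mulVec_nonneg η
    have hdd : η ⬝ᵥ η = ∑ i, η i ^ 2 := by simp [dotProduct, sq]
    have had : a ⬝ᵥ η = ∑ i, a i * η i := rfl
    have hs : ∑ i, (τε * a i) * η i = τε * ∑ i, a i * η i := by
      rw [Finset.mul_sum]; exact Finset.sum_congr rfl fun i _ => by ring
    rw [hdd, had, hs]
    nlinarith [mul_nonneg hτ.le h0]

/-- Marginalizing the joint restricted-regression posterior kernel over the two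
random effects yields a Gaussian kernel in `δ` with mean `δ̂ = (XᵀX)⁻¹Xᵀy` and
precision `τ_ε XᵀX`: there is a constant `C > 0`, independent of `δ`, with
`∫∫ exp(−½[τ_ε‖y − Xδ − W₁η₁ − W₂η₂‖² + τ₁η₁ᵀF₁η₁ + τ₂η₂ᵀF₂η₂]) dη₂ dη₁
 = C · exp(−½ τ_ε (δ − δ̂)ᵀ(XᵀX)(δ − δ̂))`. -/
theorem two_random_effects_marginal_posterior_gaussian
    {N p q₁ q₂ : ℕ}
    (X : Matrix (Fin N) (Fin p) ℝ) (hX : IsUnit (Xᵀ * X).det)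
    (W₁ : Matrix (Fin N) (Fin q₁) ℝ) (W₂ : Matrix (Fin N) (Fin q₂) ℝ)
    (hXW₁ : Xᵀ * W₁ = 0) (hXW₂ : Xᵀ * W₂ = 0) (hW₁₂ : W₁ᵀ * W₂ = 0)
    (hW₁ : W₁ᵀ * W₁ = 1) (hW₂ : W₂ᵀ * W₂ = 1)
    (F₁ : Matrix (Fin q₁) (Fin q₁) ℝ) (F₂ : Matrix (Fin q₂) (Fin q₂) ℝ)
    (hF₁ : F₁.PosDef) (hF₂ : F₂.PosDef)
    (τε τ₁ τ₂ : ℝ) (hτε : 0 < τε) (hτ₁ : 0 < τ₁) (hτ₂ : 0 < τ₂)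
    (y : Fin N → ℝ) :
    let δhat : Fin p → ℝ := (Xᵀ * X)⁻¹ *ᵥ (Xᵀ *ᵥ y)
    ∃ C : ℝ, 0 < C ∧ ∀ δ : Fin p → ℝ,
      (∫ η₁ : Fin q₁ → ℝ, ∫ η₂ : Fin q₂ → ℝ,
          Real.exp (-(1 / 2) *
            (τε * ((y - X *ᵥ δ - W₁ *ᵥ η₁ - W₂ *ᵥ η₂) ⬝ᵥ
                    (y - X *ᵥ δ - W₁ *ᵥ η₁ - W₂ *ᵥ η₂))
              + τ₁ * (η₁ ⬝ᵥ (F₁ *ᵥ η₁)) + τ₂ * (η₂ ⬝ᵥ (F₂ *ᵥ η₂)))))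
      = C * Real.exp (-(1 / 2) *
          (τε * ((δ - δhat) ⬝ᵥ ((Xᵀ * X) *ᵥ (δ - δhat))))) := by
  intro δhat
  have hδ : δhat = (Xᵀ * X)⁻¹ *ᵥ (Xᵀ *ᵥ y) := rfl
  have hGhat : (Xᵀ * X) *ᵥ δhat = Xᵀ *ᵥ y := by
    rw [hδ, mulVec_mulVec, Matrix.mul_nonsing_inv _ hX, one_mulVec]
  -- abbreviations for the η-exponents
  set g₁ : (Fin q₁ → ℝ) → ℝ := fun η =>
    τε * (η ⬝ᵥ η - 2 * ((W₁ᵀ *ᵥ y) ⬝ᵥ η)) + τ₁ * (η ⬝ᵥ (F₁ *ᵥ η)) with hg₁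
  set g₂ : (Fin q₂ → ℝ) → ℝ := fun η =>
    τε * (η ⬝ᵥ η - 2 * ((W₂ᵀ *ᵥ y) ⬝ᵥ η)) + τ₂ * (η ⬝ᵥ (F₂ *ᵥ η)) with hg₂
  have hint₁ : Integrable (fun η => Real.exp (-(1 / 2) * g₁ η)) :=
    gauss_integrable τε τ₁ hτε hτ₁ F₁ hF₁ _
  have hint₂ : Integrable (fun η => Real.exp (-(1 / 2) * g₂ η)) :=
    gauss_integrable τε τ₂ hτε hτ₂ F₂ hF₂ _
  set I₁ : ℝ := ∫ η, Real.exp (-(1 / 2) * g₁ η) with hI₁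
  set I₂ : ℝ := ∫ η, Real.exp (-(1 / 2) * g₂ η) with hI₂
  have hI₁pos : 0 < I₁ := integral_exp_pos hint₁
  have hI₂pos : 0 < I₂ := integral_exp_pos hint₂
  set K : ℝ := τε * ((y - X *ᵥ δhat) ⬝ᵥ (y - X *ᵥ δhat)) with hK
  refine ⟨Real.exp (-(1 / 2) * K) * I₁ * I₂, by positivity, ?_⟩
  intro δ
  set T : ℝ := τε * ((δ - δhat) ⬝ᵥ ((Xᵀ * X) *ᵥ (δ - δhat))) with hT
  -- the key algebraic decomposition of the exponent
  have key : ∀ (η₁ : Fin q₁ → ℝ) (η₂ : Fin q₂ → ℝ),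
      τε * ((y - X *ᵥ δ - W₁ *ᵥ η₁ - W₂ *ᵥ η₂) ⬝ᵥ
              (y - X *ᵥ δ - W₁ *ᵥ η₁ - W₂ *ᵥ η₂))
        + τ₁ * (η₁ ⬝ᵥ (F₁ *ᵥ η₁)) + τ₂ * (η₂ ⬝ᵥ (F₂ *ᵥ η₂))
      = T + K + g₁ η₁ + g₂ η₂ := by
    intro η₁ η₂
    have e1 : (X *ᵥ δ) ⬝ᵥ y = (Xᵀ *ᵥ y) ⬝ᵥ δ := by
      rw [dotProduct_comm, dot_mulVec_left]
    have e2 : y ⬝ᵥ (X *ᵥ δ) = (Xᵀ *ᵥ y) ⬝ᵥ δ := by rw [dot_mulVec_left]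
    have e3 : (X *ᵥ δ) ⬝ᵥ (X *ᵥ δ) = δ ⬝ᵥ ((Xᵀ * X) *ᵥ δ) := dot_mulVec_mulVec _ _ _ _
    have e4 : y ⬝ᵥ (W₁ *ᵥ η₁) = (W₁ᵀ *ᵥ y) ⬝ᵥ η₁ := dot_mulVec_left _ _ _
    have e5 : (W₁ *ᵥ η₁) ⬝ᵥ y = (W₁ᵀ *ᵥ y) ⬝ᵥ η₁ := by rw [dotProduct_comm, e4]
    have e6 : y ⬝ᵥ (W₂ *ᵥ η₂) = (W₂ᵀ *ᵥ y) ⬝ᵥ η₂ := dot_mulVec_left _ _ _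
    have e7 : (W₂ *ᵥ η₂) ⬝ᵥ y = (W₂ᵀ *ᵥ y) ⬝ᵥ η₂ := by rw [dotProduct_comm, e6]
    have e8 : (X *ᵥ δ) ⬝ᵥ (W₁ *ᵥ η₁) = 0 := by
      rw [dot_mulVec_mulVec, hXW₁, zero_mulVec, dotProduct_zero]
    have e9 : (W₁ *ᵥ η₁) ⬝ᵥ (X *ᵥ δ) = 0 := by rw [dotProduct_comm, e8]
    have e10 : (X *ᵥ δ) ⬝ᵥ (W₂ *ᵥ η₂) = 0 := by
      rw [dot_mulVec_mulVec, hXW₂, zero_mulVec, dotProduct_zero]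
    have e11 : (W₂ *ᵥ η₂) ⬝ᵥ (X *ᵥ δ) = 0 := by rw [dotProduct_comm, e10]
    have e12 : (W₁ *ᵥ η₁) ⬝ᵥ (W₂ *ᵥ η₂) = 0 := by
      rw [dot_mulVec_mulVec, hW₁₂, zero_mulVec, dotProduct_zero]
    have e13 : (W₂ *ᵥ η₂) ⬝ᵥ (W₁ *ᵥ η₁) = 0 := by rw [dotProduct_comm, e12]
    have e14 : (W₁ *ᵥ η₁) ⬝ᵥ (W₁ *ᵥ η₁) = η₁ ⬝ᵥ η₁ := by
      rw [dot_mulVec_mulVec, hW₁, one_mulVec]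
    have e15 : (W₂ *ᵥ η₂) ⬝ᵥ (W₂ *ᵥ η₂) = η₂ ⬝ᵥ η₂ := by
      rw [dot_mulVec_mulVec, hW₂, one_mulVec]
    have f1 : δ ⬝ᵥ ((Xᵀ * X) *ᵥ δhat) = (Xᵀ *ᵥ y) ⬝ᵥ δ := by
      rw [hGhat, dotProduct_comm]
    have f2 : δhat ⬝ᵥ ((Xᵀ * X) *ᵥ δ) = (Xᵀ *ᵥ y) ⬝ᵥ δ := by
      rw [← dot_mulVec_mulVec, dotProduct_comm, dot_mulVec_mulVec, hGhat, dotProduct_comm]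
    have f3 : δhat ⬝ᵥ ((Xᵀ * X) *ᵥ δhat) = (Xᵀ *ᵥ y) ⬝ᵥ δhat := by
      rw [hGhat, dotProduct_comm]
    have f4 : y ⬝ᵥ (X *ᵥ δhat) = (Xᵀ *ᵥ y) ⬝ᵥ δhat := by rw [dot_mulVec_left]
    have f5 : (X *ᵥ δhat) ⬝ᵥ y = (Xᵀ *ᵥ y) ⬝ᵥ δhat := by rw [dotProduct_comm, f4]
    have f6 : (X *ᵥ δhat) ⬝ᵥ (X *ᵥ δhat) = (Xᵀ *ᵥ y) ⬝ᵥ δhat := by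
      rw [dot_mulVec_mulVec, f3]
    have f7 : (X *ᵥ δ) ⬝ᵥ (X *ᵥ δhat) = (Xᵀ *ᵥ y) ⬝ᵥ δ := by
      rw [dot_mulVec_mulVec, f1]
    have f8 : (X *ᵥ δhat) ⬝ᵥ (X *ᵥ δ) = (Xᵀ *ᵥ y) ⬝ᵥ δ := by
      rw [dot_mulVec_mulVec, f2]
    simp only [hT, hK, hg₁, hg₂]
    simp only [sub_dotProduct, dotProduct_sub, mulVec_sub]
    rw [e1, e2, e3, e4, e5, e6, e7, e8, e9, e10, e11, e12, e13, e14, e15,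
      f1, f2, f3, f4, f5, f6]
    ring
  -- compute the double integral
  have hinner : ∀ η₁ : Fin q₁ → ℝ,
      (∫ η₂ : Fin q₂ → ℝ,
          Real.exp (-(1 / 2) *
            (τε * ((y - X *ᵥ δ - W₁ *ᵥ η₁ - W₂ *ᵥ η₂) ⬝ᵥ
                    (y - X *ᵥ δ - W₁ *ᵥ η₁ - W₂ *ᵥ η₂))
              + τ₁ * (η₁ ⬝ᵥ (F₁ *ᵥ η₁)) + τ₂ * (η₂ ⬝ᵥ (F₂ *ᵥ η₂)))))
      = (Real.exp (-(1 / 2) * (T + K + g₁ η₁))) * I₂ := by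
    intro η₁
    rw [hI₂, ← integral_const_mul]
    congr 1
    funext η₂
    rw [key η₁ η₂, ← Real.exp_add]
    congr 1
    ring
  calc (∫ η₁ : Fin q₁ → ℝ, ∫ η₂ : Fin q₂ → ℝ,
          Real.exp (-(1 / 2) *
            (τε * ((y - X *ᵥ δ - W₁ *ᵥ η₁ - W₂ *ᵥ η₂) ⬝ᵥ
                    (y - X *ᵥ δ - W₁ *ᵥ η₁ - W₂ *ᵥ η₂))
              + τ₁ * (η₁ ⬝ᵥ (F₁ *ᵥ η₁)) + τ₂ * (η₂ ⬝ᵥ (F₂ *ᵥ η₂)))))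
      = ∫ η₁ : Fin q₁ → ℝ,
          (Real.exp (-(1 / 2) * (T + K)) * I₂) * Real.exp (-(1 / 2) * g₁ η₁) := by
        congr 1
        funext η₁
        rw [hinner η₁,
          show (-(1 / 2 : ℝ)) * (T + K + g₁ η₁)
            = -(1 / 2) * (T + K) + -(1 / 2) * g₁ η₁ from by ring,
          Real.exp_add]
        ring
    _ = (Real.exp (-(1 / 2) * (T + K)) * I₂) * I₁ := integral_const_mul _ _
    _ = Real.exp (-(1 / 2) * K) * I₁ * I₂ * Real.exp (-(1 / 2) * T) := by
        rw [show (-(1 / 2 : ℝ)) * (T + K) = -(1 / 2) * K + -(1 / 2) * T from by ring,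
          Real.exp_add]
        ring
end

section
/- Let X be a real N × p matrix with XᵀX invertible and P_X = X(XᵀX)⁻¹Xᵀ. On a probability space, let ε = (ε_1, …, ε_N) be independent real random variables, each square-integrable with mean 0 and variance σ² > 0, let u be any ℝᴺ-valued random vector (possibly dependent among its coordinates but defined on the same probability space), and let δ ∈ ℝᵖ be fixed. Define the random response y = Xδ + (I − P_X)u + ε and the estimator δ̂ = (XᵀX)⁻¹Xᵀy. Then for each ℓ: E[δ̂_ℓ] = δ_ℓ, and for each pair ℓ, m: Cov(δ̂_ℓ, δ̂_m) = σ² ((XᵀX)⁻¹)_{ℓm}. In particular, the sampling distribution of δ̂ is unaffected by the distribution of the restricted random effects u. -/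
open Matrix MeasureTheory ProbabilityTheory

/-- Sampling distribution of the OLS estimator in Restricted Network
Regression: with `y = Xδ + (I − P_X)u + ε` where the `ε_i` are independent,
square-integrable, mean-zero with variance `σ²`, the estimator
`δ̂ = (XᵀX)⁻¹Xᵀy` satisfies `E[δ̂_ℓ] = δ_ℓ` and
`Cov(δ̂_ℓ, δ̂_m) = σ²((XᵀX)⁻¹)_{ℓm}`, regardless of the distribution of `u`. -/
theorem restricted_regression_ols_unbiased_covariance
    {N p : ℕ} (X : Matrix (Fin N) (Fin p) ℝ) (hX : IsUnit (Xᵀ * X).det)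
    {Ω : Type*} [MeasureSpace Ω] [IsProbabilityMeasure (volume : Measure Ω)]
    (ε : Fin N → Ω → ℝ) (hmeas : ∀ i, Measurable (ε i))
    (hindep : iIndepFun ε)
    (hL2 : ∀ i, MemLp (ε i) 2)
    (hmean : ∀ i, (∫ ω, ε i ω) = 0)
    (σ2 : ℝ) (hσ2 : 0 < σ2)
    (hvar : ∀ i, (∫ ω, (ε i ω) ^ 2) = σ2)
    (u : Ω → Fin N → ℝ) (δ : Fin p → ℝ) :
    let PX : Matrix (Fin N) (Fin N) ℝ := X * (Xᵀ * X)⁻¹ * Xᵀ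
    let y : Ω → Fin N → ℝ := fun ω => X *ᵥ δ + (1 - PX) *ᵥ u ω + fun i => ε i ω
    let δhat : Ω → Fin p → ℝ := fun ω => (Xᵀ * X)⁻¹ *ᵥ (Xᵀ *ᵥ y ω)
    (∀ ℓ : Fin p, (∫ ω, δhat ω ℓ) = δ ℓ) ∧
    (∀ ℓ m : Fin p,
        (∫ ω, (δhat ω ℓ - δ ℓ) * (δhat ω m - δ m)) = σ2 * (Xᵀ * X)⁻¹ ℓ m) := by
  intro PX y δhat
  set M : Matrix (Fin p) (Fin N) ℝ := (Xᵀ * X)⁻¹ * Xᵀ with hM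
  -- key matrix identities
  have hinv : (Xᵀ * X)⁻¹ * (Xᵀ * X) = 1 := Matrix.nonsing_inv_mul _ hX
  have hinv' : (Xᵀ * X) * (Xᵀ * X)⁻¹ = 1 := Matrix.mul_nonsing_inv _ hX
  have hannih : Xᵀ * (1 - PX) = 0 := by
    show Xᵀ * (1 - X * (Xᵀ * X)⁻¹ * Xᵀ) = 0
    rw [Matrix.mul_sub, Matrix.mul_one]
    rw [show Xᵀ * (X * (Xᵀ * X)⁻¹ * Xᵀ) = ((Xᵀ * X) * (Xᵀ * X)⁻¹) * Xᵀ by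
      simp only [Matrix.mul_assoc]]
    rw [hinv', Matrix.one_mul, sub_self]
  -- pointwise formula for δhat
  have hform : ∀ ω ℓ, δhat ω ℓ = δ ℓ + ∑ i, M ℓ i * ε i ω := by
    intro ω ℓ
    show ((Xᵀ * X)⁻¹ *ᵥ (Xᵀ *ᵥ (X *ᵥ δ + (1 - PX) *ᵥ u ω + fun i => ε i ω))) ℓ = _
    have h1 : (Xᵀ * X)⁻¹ * Xᵀ * X = 1 := by rw [Matrix.mul_assoc, hinv]
    have h2 : (Xᵀ * X)⁻¹ * Xᵀ * (1 - PX) = 0 := by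
      rw [Matrix.mul_assoc, hannih, Matrix.mul_zero]
    rw [Matrix.mulVec_add, Matrix.mulVec_add, Matrix.mulVec_add, Matrix.mulVec_add]
    simp only [Matrix.mulVec_mulVec, ← Matrix.mul_assoc, h1, h2, Matrix.one_mulVec,
      Matrix.zero_mulVec]
    simp [Matrix.mulVec, dotProduct, hM]
  have hint : ∀ i, Integrable (ε i) := fun i => (hL2 i).integrable one_le_two
  have hmul : ∀ i j, Integrable (fun ω => ε i ω * ε j ω) := by
    intro i j
    have h := (hL2 j).smul (hL2 i) (p := 2) (q := 2) (r := 1)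
    exact memLp_one_iff_integrable.mp h
  -- first part
  have hdev : ∀ ℓ, Integrable (fun ω => ∑ i, M ℓ i * ε i ω) := by
    intro ℓ
    exact integrable_finset_sum _ fun i _ => (hint i).const_mul _
  have hmean' : ∀ ℓ, (∫ ω, ∑ i, M ℓ i * ε i ω) = 0 := by
    intro ℓ
    rw [integral_finset_sum _ fun i _ => (hint i).const_mul _]
    simp [integral_const_mul, hmean]
  have hpart1 : ∀ ℓ : Fin p, (∫ ω, δhat ω ℓ) = δ ℓ := by
    intro ℓ
    have : (fun ω => δhat ω ℓ) = fun ω => δ ℓ + ∑ i, M ℓ i * ε i ω := funext fun ω => hform ω ℓ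
    rw [this, integral_add (integrable_const _) (hdev ℓ), integral_const, hmean']
    simp
  refine ⟨hpart1, ?_⟩
  intro ℓ m
  have hform' : ∀ ω, (δhat ω ℓ - δ ℓ) * (δhat ω m - δ m)
      = ∑ i, ∑ j, M ℓ i * M m j * (ε i ω * ε j ω) := by
    intro ω
    rw [hform ω ℓ, hform ω m]
    ring_nf
    rw [Finset.sum_mul_sum]
    congr 1; funext i; congr 1; funext j; ring
  have hcross : ∀ i j, i ≠ j → (∫ ω, ε i ω * ε j ω) = 0 := by
    intro i j hij
    have hind : IndepFun (ε i) (ε j) := hindep.indepFun hij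
    have := hind.integral_mul_eq_mul_integral (hint i).aestronglyMeasurable (hint j).aestronglyMeasurable
    simpa [Pi.mul_apply, hmean i, hmean j] using this
  calc (∫ ω, (δhat ω ℓ - δ ℓ) * (δhat ω m - δ m))
      = ∫ ω, ∑ i, ∑ j, M ℓ i * M m j * (ε i ω * ε j ω) := by
        exact integral_congr_ae (Filter.Eventually.of_forall fun ω => hform' ω)
    _ = ∑ i, ∑ j, M ℓ i * M m j * (∫ ω, ε i ω * ε j ω) := by
        rw [integral_finset_sum _ fun i _ =>
          integrable_finset_sum _ fun j _ => (hmul i j).const_mul _]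
        refine Finset.sum_congr rfl fun i _ => ?_
        rw [integral_finset_sum _ fun j _ => (hmul i j).const_mul _]
        exact Finset.sum_congr rfl fun j _ => integral_const_mul _ _
    _ = ∑ i, M ℓ i * M m i * σ2 := by
        refine Finset.sum_congr rfl fun i _ => ?_
        rw [Finset.sum_eq_single i]
        · rw [show (∫ ω, ε i ω * ε i ω) = σ2 by rw [← hvar i]; congr 1; funext ω; ring]
        · intro j _ hj; rw [hcross i j (Ne.symm hj), mul_zero]
        · intro h; exact absurd (Finset.mem_univ i) h
    _ = σ2 * (Xᵀ * X)⁻¹ ℓ m := by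
        have hMM : M * Mᵀ = (Xᵀ * X)⁻¹ := by
          have hsymm : ((Xᵀ * X)⁻¹)ᵀ = (Xᵀ * X)⁻¹ := by
            rw [Matrix.transpose_nonsing_inv, Matrix.transpose_mul, Matrix.transpose_transpose]
          rw [hM, Matrix.transpose_mul, Matrix.transpose_transpose, hsymm]
          calc (Xᵀ * X)⁻¹ * Xᵀ * (X * (Xᵀ * X)⁻¹)
              = (Xᵀ * X)⁻¹ * (Xᵀ * X) * (Xᵀ * X)⁻¹ := by simp only [Matrix.mul_assoc]
            _ = (Xᵀ * X)⁻¹ := by rw [hinv, Matrix.one_mul]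
        rw [← hMM]
        simp [Matrix.mul_apply, Matrix.transpose_apply, Finset.mul_sum]
        ring_nf
        exact Finset.sum_congr rfl fun i _ => by ring
end
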